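/- For all real R ≥ 4, one has R·(1 − (R−1)·log(R−1)) < 0; consequently the function Q₃(R) = log(R−1)·ψ(exp(μ(R−1) − μ(R))) is decreasing on [4, ∞), where ψ(t) = t/√(1−t²) and μ(x) = x²/2 − log(x). -/

import Mathlib

open Real Set

/-- μ(x) = x²/2 − log x. -/
noncomputable def mu (x : ℝ) : ℝ := x ^ 2 / 2 - Real.log x

/-- ψ(t) = t/√(1 − t²). -/
noncomputable def psi (t : ℝ) : ℝ := t / Real.sqrt (1 - t ^ 2)


lemma log_gt_one {R : ℝ} (hR : 4 ≤ R) : 1 < Real.log (R - 1) := by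
  have h3 : (1:ℝ) < Real.log 3 := by
    rw [show (1:ℝ) = Real.log (Real.exp 1) by simp]
    exact Real.log_lt_log (Real.exp_pos 1) (lt_of_lt_of_le Real.exp_one_lt_d9 (by norm_num))
  exact lt_of_lt_of_le h3 (Real.log_le_log (by norm_num) (by linarith))

lemma part1 : ∀ R : ℝ, 4 ≤ R → R * (1 - (R - 1) * Real.log (R - 1)) < 0 := by
  intro R hR
  have h1 := log_gt_one hR
  nlinarith [mul_pos (show (0:ℝ) < R - 1 - 1 by linarith) (show (0:ℝ) < Real.log (R-1) - 1 by linarith)]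

lemma g_neg {R : ℝ} (hR : 4 ≤ R) : mu (R - 1) - mu R < 0 := by
  have h1 : (0:ℝ) < R - 1 := by linarith
  have hle : Real.log (R / (R-1)) ≤ R/(R-1) - 1 := Real.log_le_sub_one_of_pos (by positivity)
  rw [Real.log_div (by linarith) (by linarith)] at hle
  have h2 : R/(R-1) - 1 = 1/(R-1) := by field_simp; ring
  have h3 : 1/(R-1) ≤ 1/3 := by
    rw [div_le_div_iff₀ h1 (by norm_num)]; linarith
  rw [h2] at hle
  unfold mu
  nlinarith

lemma hasDerivAt_f {R : ℝ} (hR : 4 ≤ R) :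
    HasDerivAt (fun x => Real.log (x - 1) * psi (Real.exp (mu (x - 1) - mu x)))
      (Real.exp (mu (R-1) - mu R) / (Real.sqrt (1 - Real.exp (mu (R-1) - mu R)^2) * (R - 1))
        + Real.log (R - 1) * (Real.exp (mu (R-1) - mu R) * (((R-1) - 1/(R-1)) - (R - 1/R))
            / Real.sqrt (1 - Real.exp (mu (R-1) - mu R)^2) ^ 3)) R := by
  have h1 : (0:ℝ) < R - 1 := by linarith
  have h0 : (0:ℝ) < R := by linarith
  have hid : HasDerivAt (fun x : ℝ => x - 1) 1 R := (hasDerivAt_id R).sub_const 1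
  have hlog : HasDerivAt (fun x : ℝ => Real.log (x - 1)) (1/(R-1)) R := by
    simpa using hid.log (ne_of_gt h1)
  have hmu1 : HasDerivAt (fun x => mu (x - 1)) ((R-1) - 1/(R-1)) R := by
    have hsq : HasDerivAt (fun x : ℝ => (x-1)^2/2) (R-1) R := by
      have h := (hid.pow 2).div_const 2
      norm_num at h
      exact h
    have : HasDerivAt (fun x : ℝ => (x-1)^2/2 - Real.log (x-1)) ((R-1) - 1/(R-1)) R := hsq.sub hlog
    simpa [mu] using this
  have hmu2 : HasDerivAt mu (R - 1/R) R := by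
    have hsq : HasDerivAt (fun x : ℝ => x^2/2) R R := by
      have h := ((hasDerivAt_id R).pow 2).div_const 2
      norm_num at h
      exact h
    have hl : HasDerivAt Real.log (1/R) R := by simpa using Real.hasDerivAt_log (ne_of_gt h0)
    have : HasDerivAt (fun x : ℝ => x^2/2 - Real.log x) (R - 1/R) R := hsq.sub hl
    exact this
  set G' := ((R-1) - 1/(R-1)) - (R - 1/R) with hG'
  have hg : HasDerivAt (fun x => mu (x-1) - mu x) G' R := hmu1.sub hmu2
  set t := Real.exp (mu (R-1) - mu R) with hT
  have ht0 : 0 < t := Real.exp_pos _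
  have ht1 : t < 1 := by
    rw [hT]
    have h := Real.exp_lt_exp.mpr (g_neg hR)
    rwa [Real.exp_zero] at h
  have hspos : 0 < 1 - t^2 := by nlinarith
  set a := Real.sqrt (1 - t^2) with hA
  have hapos : 0 < a := Real.sqrt_pos.mpr hspos
  have ha2 : a^2 = 1 - t^2 := Real.sq_sqrt hspos.le
  have ht : HasDerivAt (fun x => Real.exp (mu (x-1) - mu x)) (t * G') R := by
    simpa [← hT, mul_comm] using hg.exp
  have hs : HasDerivAt (fun x => 1 - Real.exp (mu (x-1) - mu x)^2) (-(2*t*(t*G'))) R := by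
    have h := (ht.pow 2).const_sub 1
    convert h using 1
    push_cast
    · rfl
    · rfl
    · rfl
    · show -(2*t*(t*G')) = -(((2:ℕ):ℝ) * t^1 * (t*G'))
      push_cast
      ring
  have hsqrt : HasDerivAt (fun x => Real.sqrt (1 - Real.exp (mu (x-1) - mu x)^2))
      ((-(2*t*(t*G'))) / (2 * a)) R := by
    have := hs.sqrt (ne_of_gt (by rw [← hT]; exact hspos))
    simpa [← hT, ← hA] using this
  have hdiv : HasDerivAt (fun x => Real.exp (mu (x-1) - mu x) / Real.sqrt (1 - Real.exp (mu (x-1) - mu x)^2))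
      ((t * G' * a - t * ((-(2*t*(t*G'))) / (2 * a))) / a^2) R := by
    have := ht.div hsqrt (ne_of_gt (by rw [← hT, ← hA]; exact hapos))
    exact this
  have hfull := hlog.mul hdiv
  have heq : (fun x => Real.log (x - 1) * psi (Real.exp (mu (x - 1) - mu x)))
      = (fun x => Real.log (x-1) * (Real.exp (mu (x-1) - mu x) / Real.sqrt (1 - Real.exp (mu (x-1) - mu x)^2))) := by
    funext x; rw [psi]
  rw [heq]
  have ha0 : a ≠ 0 := ne_of_gt hapos
  have e1 : t * G' * a - t * (-(2*t*(t*G')) / (2*a)) = (t*G'*(a^2+t^2))/a := by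
    field_simp; ring
  have e2 : a^2 + t^2 = 1 := by linarith [ha2]
  have e3 : (t * G' * a - t * (-(2*t*(t*G')) / (2*a))) / a^2 = t * G' / a^3 := by
    rw [e1, e2, mul_one, div_div]
    congr 1
    ring
  have e4 : 1 / (R - 1) * (t / a) = t / (a * (R-1)) := by
    rw [div_mul_div_comm, one_mul, mul_comm]
  rw [← hT, ← hA] at hfull
  rw [e4, e3] at hfull
  exact hfull

lemma Q3_deriv_neg {R : ℝ} (hR : 4 ≤ R) :
    (Real.exp (mu (R-1) - mu R) / (Real.sqrt (1 - Real.exp (mu (R-1) - mu R)^2) * (R - 1))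
        + Real.log (R - 1) * (Real.exp (mu (R-1) - mu R) * (((R-1) - 1/(R-1)) - (R - 1/R))
            / Real.sqrt (1 - Real.exp (mu (R-1) - mu R)^2) ^ 3)) < 0 := by
  have h1 : (0:ℝ) < R - 1 := by linarith
  have h0 : (0:ℝ) < R := by linarith
  set t := Real.exp (mu (R-1) - mu R) with hT
  have ht0 : 0 < t := Real.exp_pos _
  have ht1 : t < 1 := by
    rw [hT]
    have h := Real.exp_lt_exp.mpr (g_neg hR)
    rwa [Real.exp_zero] at h
  have hspos : 0 < 1 - t^2 := by nlinarith
  set a := Real.sqrt (1 - t^2) with hA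
  have hapos : 0 < a := Real.sqrt_pos.mpr hspos
  have ha2 : a^2 = 1 - t^2 := Real.sq_sqrt hspos.le
  have hL : 1 < Real.log (R - 1) := log_gt_one hR
  have hG'val : ((R-1) - 1/(R-1)) - (R - 1/R) = -((R^2-R+1)/(R*(R-1))) := by
    field_simp; ring
  rw [hG'val]
  have key : (1-t^2)*R < Real.log (R-1)*(R^2-R+1) := by
    have hA1 : (1-t^2)*R < R := by nlinarith
    have hB : R < R^2 - R + 1 := by nlinarith
    have hC : R^2-R+1 < Real.log (R-1)*(R^2-R+1) := by nlinarith
    linarith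
  have hcomb : t/(a*(R-1)) + Real.log (R-1) * (t * -((R^2-R+1)/(R*(R-1))) / a^3)
      = t * ((1-t^2)*R - Real.log (R-1)*(R^2-R+1)) / (a^3*R*(R-1)) := by
    rw [← ha2]
    field_simp
    ring
  rw [hcomb]
  apply div_neg_of_neg_of_pos
  · nlinarith
  · positivity

theorem Q3_decreasing :
    (∀ R : ℝ, 4 ≤ R → R * (1 - (R - 1) * Real.log (R - 1)) < 0) ∧
    StrictAntiOn (fun R => Real.log (R - 1) * psi (Real.exp (mu (R - 1) - mu R)))
      (Set.Ici (4 : ℝ)) := by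
  refine ⟨part1, ?_⟩
  apply strictAntiOn_of_deriv_neg (convex_Ici 4)
  · exact fun x hx => ((hasDerivAt_f hx).differentiableAt.continuousAt).continuousWithinAt
  · intro x hx
    rw [interior_Ici] at hx
    have h4 : (4:ℝ) ≤ x := le_of_lt hx
    rw [(hasDerivAt_f h4).deriv]
    exact Q3_deriv_neg h4
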